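/- Let X, Y and Θ be real Hilbert spaces, let A : X → X and C : X → Y be bounded linear operators, T > 0, κ ≥ 0, and γ₀ > 0. Assume ‖exp(tA)‖ ≤ 1 for all t ≥ 0 and that ∫₀^T ‖C (exp(tA) x)‖²_Y dt ≥ γ₀² ‖x‖²_X for all x ∈ X. Let U₀ : Θ → Θ be bounded, self-adjoint with ⟨θ, U₀θ⟩ ≥ δ‖θ‖² for all θ and some δ > 0, let θ₀ ∈ Θ, let y : [0,T] → Y be strongly measurable with ∫₀^T ‖y(t)‖² dt < ∞, and let B : [0,T] → L(Θ,X) be strongly measurable with ∫₀^T ‖B(s)‖² ds < ∞. Define the observer trajectory ẑ[ξ,ζ](t) = exp(t(A − κC*C)) ζ + ∫₀^t exp((t−s)(A − κC*C)) (B(s)ξ + κ C* y(s)) ds and the cost J(ξ,ζ) = ⟨ξ − θ₀, U₀(ξ − θ₀)⟩_Θ + ∫₀^T ‖y(t) − C ẑ[ξ,ζ](t)‖²_Y dt. Then J is strictly convex on Θ × X: for all (ξ₁,ζ₁) ≠ (ξ₂,ζ₂) and all t ∈ (0,1), J(t ξ₁ + (1−t) ξ₂, t ζ₁ + (1−t)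 ζ₂) < t J(ξ₁,ζ₁) + (1−t) J(ξ₂,ζ₂). -/

import Mathlib

set_option maxHeartbeats 1000000
set_option synthInstance.maxHeartbeats 400000

open MeasureTheory NormedSpace
open scoped RealInnerProductSpace

lemma norm_sq_combo {E : Type*} [NormedAddCommGroup E] [InnerProductSpace ℝ E]
    (a b : E) (t : ℝ) :
    ‖t • a + (1 - t) • b‖ ^ 2
      = t * ‖a‖ ^ 2 + (1 - t) * ‖b‖ ^ 2 - t * (1 - t) * ‖a - b‖ ^ 2 := by
  simp only [← real_inner_self_eq_norm_sq, inner_add_left, inner_add_right,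
    inner_sub_left, inner_sub_right, inner_smul_left, inner_smul_right,
    conj_trivial]
  rw [real_inner_comm b a]
  ring

lemma quad_combo {Θ : Type*} [NormedAddCommGroup Θ] [InnerProductSpace ℝ Θ]
    (U : Θ →L[ℝ] Θ) (hsym : ∀ a b : Θ, ⟪a, U b⟫ = ⟪b, U a⟫) (a b : Θ) (t : ℝ) :
    ⟪t • a + (1 - t) • b, U (t • a + (1 - t) • b)⟫
      = t * ⟪a, U a⟫ + (1 - t) * ⟪b, U b⟫ - t * (1 - t) * ⟪a - b, U (a - b)⟫ := by
  simp only [map_add, ContinuousLinearMap.map_smul, map_sub, inner_add_left, inner_add_right,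
    inner_sub_left, inner_sub_right, inner_smul_left, inner_smul_right,
    conj_trivial]
  rw [hsym b a]
  ring

lemma obs_pos {X Y : Type*} [NormedAddCommGroup X] [InnerProductSpace ℝ X] [CompleteSpace X]
    [NormedAddCommGroup Y] [InnerProductSpace ℝ Y] [CompleteSpace Y]
    (A : X →L[ℝ] X) (C : X →L[ℝ] Y) (T κ γ₀ : ℝ) (hT : 0 < T) (hγ₀ : 0 < γ₀)
    (hobs : ∀ x : X, γ₀ ^ 2 * ‖x‖ ^ 2 ≤ ∫ t in (0:ℝ)..T, ‖C (exp (t • A) x)‖ ^ 2)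
    (Acl : X →L[ℝ] X) (hAcl : Acl = A - κ • (ContinuousLinearMap.adjoint C ∘L C))
    (x : X) (hx : x ≠ 0) :
    0 < ∫ s in (0:ℝ)..T, ‖C (exp (s • Acl) x)‖ ^ 2 := by
  let +nondep : NormedAlgebra ℚ (X →L[ℝ] X) := .restrictScalars ℚ ℝ (X →L[ℝ] X)
  have hexpAcl : Continuous fun s : ℝ => exp (s • Acl) :=
    exp_continuous.comp (continuous_id.smul continuous_const)
  have hvx : Continuous fun s : ℝ => exp (s • Acl) x :=
    (ContinuousLinearMap.apply ℝ X x).continuous.comp hexpAcl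
  have hfc : Continuous fun s : ℝ => ‖C (exp (s • Acl) x)‖ ^ 2 :=
    ((C.continuous.comp hvx).norm.pow 2)
  have hfi : IntervalIntegrable (fun s : ℝ => ‖C (exp (s • Acl) x)‖ ^ 2) volume 0 T :=
    hfc.intervalIntegrable 0 T
  have hnonneg : (0:ℝ) ≤ ∫ s in (0:ℝ)..T, ‖C (exp (s • Acl) x)‖ ^ 2 :=
    intervalIntegral.integral_nonneg hT.le (fun u _ => by positivity)
  rcases hnonneg.lt_or_eq with h | h
  · exact h
  exfalso
  have hz : ∫ s in (0:ℝ)..T, ‖C (exp (s • Acl) x)‖ ^ 2 = 0 := h.symm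
  have hae := (intervalIntegral.integral_eq_zero_iff_of_le_of_nonneg_ae hT.le
    (Filter.Eventually.of_forall fun u => by positivity) hfi).mp hz
  have heqIoc : Set.EqOn (fun s : ℝ => ‖C (exp (s • Acl) x)‖ ^ 2) 0 (Set.Ioc 0 T) :=
    Measure.eqOn_Ioc_of_ae_eq (μ := volume) hae hfc.continuousOn continuousOn_const
  have heqIcc : Set.EqOn (fun s : ℝ => ‖C (exp (s • Acl) x)‖ ^ 2) 0 (Set.Icc 0 T) := by
    have hcl := heqIoc.closure hfc continuous_const
    rwa [closure_Ioc hT.ne] at hcl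
  have key : ∀ s ∈ Set.Icc (0:ℝ) T, C (exp (s • Acl) x) = 0 := by
    intro s hs
    have h0 := heqIcc hs
    simp only [Pi.zero_apply] at h0
    have hn : ‖C (exp (s • Acl) x)‖ = 0 := by
      nlinarith [norm_nonneg (C (exp (s • Acl) x))]
    exact norm_eq_zero.mp hn
  have hAA : ∀ τ ∈ Set.Icc (0:ℝ) T, exp (τ • Acl) x = exp (τ • A) x := by
    intro τ hτ
    have hderiv : ∀ s ∈ Set.Ico (0:ℝ) τ,
        HasDerivAt (fun s : ℝ => exp ((τ - s) • A) (exp (s • Acl) x)) 0 s := by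
      intro s hs
      have hsT : s ∈ Set.Icc (0:ℝ) T := ⟨hs.1, hs.2.le.trans hτ.2⟩
      have h1 := hasDerivAt_exp_smul_const (𝕂 := ℝ) A (τ - s)
      have h2 : HasDerivAt (fun s : ℝ => τ - s) (-1) s := (hasDerivAt_id s).const_sub τ
      have hu : HasDerivAt (fun s : ℝ => exp ((τ - s) • A))
          ((-1:ℝ) • (exp ((τ - s) • A) * A)) s := h1.scomp s h2
      have hv : HasDerivAt (fun s : ℝ => exp (s • Acl) x)
          ((Acl * exp (s • Acl)) x) s := by
        have h3 := (hasDerivAt_exp_smul_const' (𝕂 := ℝ) Acl s).clm_apply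
          (hasDerivAt_const s x)
        simpa using h3
      have hg := hu.clm_apply hv
      have hCw : C (exp (s • Acl) x) = 0 := key s hsT
      have hAclw : Acl (exp (s • Acl) x) = A (exp (s • Acl) x) := by
        nth_rewrite 1 [hAcl]
        simp [ContinuousLinearMap.sub_apply, ContinuousLinearMap.smul_apply,
          ContinuousLinearMap.comp_apply, hCw]
      have hzero : ((-1:ℝ) • (exp ((τ - s) • A) * A)) (exp (s • Acl) x)
          + (exp ((τ - s) • A)) ((Acl * exp (s • Acl)) x) = 0 := by
        simp [ContinuousLinearMap.mul_apply, hAclw]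
      exact hzero ▸ hg
    have hcontg : ContinuousOn (fun s : ℝ => exp ((τ - s) • A) (exp (s • Acl) x))
        (Set.Icc 0 τ) := by
      apply Continuous.continuousOn
      exact Continuous.clm_apply
        (exp_continuous.comp ((continuous_const.sub continuous_id).smul continuous_const)) hvx
    have hconst := constant_of_has_deriv_right_zero hcontg
      (fun s hs => (hderiv s hs).hasDerivWithinAt) τ (Set.right_mem_Icc.mpr hτ.1)
    simpa [sub_self, zero_smul, exp_zero] using hconst
  have hCA : ∀ s ∈ Set.uIcc (0:ℝ) T, ‖C (exp (s • A) x)‖ ^ 2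
      = ‖C (exp (s • Acl) x)‖ ^ 2 := by
    intro s hs
    rw [Set.uIcc_of_le hT.le] at hs
    rw [← hAA s hs]
  have hAint : ∫ s in (0:ℝ)..T, ‖C (exp (s • A) x)‖ ^ 2 = 0 := by
    rw [intervalIntegral.integral_congr hCA]
    exact hz
  have hb := hobs x
  rw [hAint] at hb
  have hnx : 0 < ‖x‖ := norm_pos_iff.mpr hx
  nlinarith [mul_pos (pow_pos hγ₀ 2) (pow_pos hnx 2)]

lemma exp_apply_integrable {X : Type*} [NormedAddCommGroup X] [NormedSpace ℝ X] [CompleteSpace X]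
    (M : X →L[ℝ] X) (T : ℝ) (hT : 0 < T) (w : ℝ → X)
    (hw : AEStronglyMeasurable w (volume.restrict (Set.Ioc (0:ℝ) T)))
    (g : ℝ → ℝ) (hg : IntervalIntegrable g volume 0 T)
    (hbound : ∀ r ∈ Set.Ioc (0:ℝ) T, ‖w r‖ ≤ g r) :
    IntervalIntegrable (fun r => exp ((-r) • M) (w r)) volume 0 T := by
  let +nondep : NormedAlgebra ℚ (X →L[ℝ] X) := .restrictScalars ℚ ℝ (X →L[ℝ] X)
  have hcontexp : Continuous fun r : ℝ => exp ((-r) • M) :=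
    exp_continuous.comp (continuous_neg.smul continuous_const)
  obtain ⟨K, hK⟩ := (isCompact_Icc (a := (0:ℝ)) (b := T)).exists_bound_of_continuousOn
    hcontexp.continuousOn
  have hK0 : (0:ℝ) ≤ K := le_trans (norm_nonneg _) (hK 0 (Set.left_mem_Icc.mpr hT.le))
  have hmeas : AEStronglyMeasurable (fun r => exp ((-r) • M) (w r))
      (volume.restrict (Set.Ioc (0:ℝ) T)) := by
    have hpair : AEStronglyMeasurable (fun r => (exp ((-r) • M), w r))
        (volume.restrict (Set.Ioc (0:ℝ) T)) :=
      (hcontexp.aestronglyMeasurable).prodMk hw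
    have happ : Continuous (fun p : (X →L[ℝ] X) × X => p.1 p.2) :=
      isBoundedBilinearMap_apply.continuous
    exact happ.comp_aestronglyMeasurable hpair
  apply IntervalIntegrable.mono_fun' (g := fun r => K * g r) (hg.const_mul K)
  · rwa [Set.uIoc_of_le hT.le]
  · rw [Set.uIoc_of_le hT.le]
    filter_upwards [ae_restrict_mem measurableSet_Ioc] with r hr
    have h1 : ‖exp ((-r) • M) (w r)‖ ≤ ‖exp ((-r) • M)‖ * ‖w r‖ :=
      (exp ((-r) • M)).le_opNorm (w r)
    have h2 : ‖exp ((-r) • M)‖ ≤ K := hK r ⟨hr.1.le, hr.2⟩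
    have h3 : ‖w r‖ ≤ g r := hbound r hr
    have h4 : (0:ℝ) ≤ ‖w r‖ := norm_nonneg _
    calc ‖exp ((-r) • M) (w r)‖ ≤ ‖exp ((-r) • M)‖ * ‖w r‖ := h1
      _ ≤ K * g r := mul_le_mul h2 h3 h4 hK0

/-- Lemma 2.2: strict convexity of the regularized output-error cost functional. -/
theorem stmt_4
    {X : Type*} [NormedAddCommGroup X] [InnerProductSpace ℝ X] [CompleteSpace X]
    {Y : Type*} [NormedAddCommGroup Y] [InnerProductSpace ℝ Y] [CompleteSpace Y]
    {Θ : Type*} [NormedAddCommGroup Θ] [InnerProductSpace ℝ Θ] [CompleteSpace Θ]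
    (A : X →L[ℝ] X) (C : X →L[ℝ] Y) (T κ γ₀ : ℝ)
    (hT : 0 < T) (hκ : 0 ≤ κ) (hγ₀ : 0 < γ₀)
    (hcontr : ∀ t : ℝ, 0 ≤ t → ‖exp (t • A)‖ ≤ 1)
    (hobs : ∀ x : X, γ₀ ^ 2 * ‖x‖ ^ 2 ≤ ∫ t in (0 : ℝ)..T, ‖C (exp (t • A) x)‖ ^ 2)
    (U₀ : Θ →L[ℝ] Θ) (hU₀sa : ContinuousLinearMap.adjoint U₀ = U₀)
    (δ : ℝ) (hδ : 0 < δ) (hU₀ : ∀ θ : Θ, δ * ‖θ‖ ^ 2 ≤ ⟪θ, U₀ θ⟫)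
    (θ₀ : Θ)
    (y : ℝ → Y)
    (hy_meas : AEStronglyMeasurable y (volume.restrict (Set.Ioc (0 : ℝ) T)))
    (hy_L2 : IntervalIntegrable (fun t => ‖y t‖ ^ 2) volume 0 T)
    (B : ℝ → Θ →L[ℝ] X)
    (hB_meas : AEStronglyMeasurable B (volume.restrict (Set.Ioc (0 : ℝ) T)))
    (hB_L2 : IntervalIntegrable (fun s => ‖B s‖ ^ 2) volume 0 T) :
    -- the observer trajectory and the cost
    let Acl : X →L[ℝ] X := A - κ • (ContinuousLinearMap.adjoint C ∘L C)
    let zhat : Θ → X → ℝ → X := fun ξ ζ t =>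
      exp (t • Acl) ζ +
        ∫ s in (0 : ℝ)..t,
          exp ((t - s) • Acl) (B s ξ + κ • ContinuousLinearMap.adjoint C (y s))
    let J : Θ → X → ℝ := fun ξ ζ =>
      ⟪ξ - θ₀, U₀ (ξ - θ₀)⟫ + ∫ t in (0 : ℝ)..T, ‖y t - C (zhat ξ ζ t)‖ ^ 2
    -- strict convexity
    ∀ (ξ₁ ξ₂ : Θ) (ζ₁ ζ₂ : X), (ξ₁, ζ₁) ≠ (ξ₂, ζ₂) → ∀ t : ℝ, t ∈ Set.Ioo (0 : ℝ) 1 →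
      J (t • ξ₁ + (1 - t) • ξ₂) (t • ζ₁ + (1 - t) • ζ₂) <
        t * J ξ₁ ζ₁ + (1 - t) * J ξ₂ ζ₂ := by
  intro Acl zhat J ξ₁ ξ₂ ζ₁ ζ₂ hne t ht
  let +nondep : NormedAlgebra ℚ (X →L[ℝ] X) := .restrictScalars ℚ ℝ (X →L[ℝ] X)
  have ht1 : 0 < t := ht.1
  have ht2 : 0 < 1 - t := by linarith [ht.2]
  -- basic abbreviations
  set adjC := ContinuousLinearMap.adjoint C with hadjC
  set w : Θ → ℝ → X := fun ξ r => B r ξ + κ • adjC (y r) with hw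
  set G : Θ → ℝ → X := fun ξ r => exp ((-r) • Acl) (w ξ r) with hG
  set W : Θ → ℝ → X := fun ξ s => ∫ r in (0:ℝ)..s, G ξ r with hW
  set z : Θ → X → ℝ → X := fun ξ ζ s => exp (s • Acl) (ζ + W ξ s) with hz
  set e : Θ → X → ℝ → Y := fun ξ ζ s => y s - C (z ξ ζ s) with he
  set ξc : Θ := t • ξ₁ + (1 - t) • ξ₂ with hξc
  set ζc : X := t • ζ₁ + (1 - t) • ζ₂ with hζc
  have hexpAcl : Continuous fun s : ℝ => exp (s • Acl) :=
    exp_continuous.comp (continuous_id.smul continuous_const)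
  -- measurability of w ξ
  have hw_meas : ∀ ξ : Θ, AEStronglyMeasurable (w ξ) (volume.restrict (Set.Ioc (0:ℝ) T)) := by
    intro ξ
    exact ((ContinuousLinearMap.apply ℝ X ξ).continuous.comp_aestronglyMeasurable hB_meas).add
      (((adjC.continuous.comp_aestronglyMeasurable hy_meas)).const_smul κ)
  -- integrability of G ξ
  have hGint : ∀ ξ : Θ, IntervalIntegrable (G ξ) volume 0 T := by
    intro ξ
    apply exp_apply_integrable Acl T hT (w ξ) (hw_meas ξ)
      (fun r => ‖ξ‖ * (1 + ‖B r‖ ^ 2) + κ * ‖adjC‖ * (1 + ‖y r‖ ^ 2))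
    · exact ((intervalIntegrable_const.add hB_L2).const_mul ‖ξ‖).add
        ((intervalIntegrable_const.add hy_L2).const_mul (κ * ‖adjC‖))
    · intro r _
      have h1 : ‖B r ξ‖ ≤ ‖B r‖ * ‖ξ‖ := (B r).le_opNorm ξ
      have h2 : ‖adjC (y r)‖ ≤ ‖adjC‖ * ‖y r‖ := adjC.le_opNorm (y r)
      have h3 : ‖w ξ r‖ ≤ ‖B r ξ‖ + κ * ‖adjC (y r)‖ := by
        rw [hw]
        refine le_trans (norm_add_le _ _) ?_
        rw [norm_smul, Real.norm_eq_abs, abs_of_nonneg hκ]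
      have h4 : ‖B r‖ ≤ 1 + ‖B r‖ ^ 2 := by nlinarith [sq_nonneg (‖B r‖ - 1)]
      have h5 : ‖y r‖ ≤ 1 + ‖y r‖ ^ 2 := by nlinarith [sq_nonneg (‖y r‖ - 1)]
      have h6 : ‖B r‖ * ‖ξ‖ ≤ ‖ξ‖ * (1 + ‖B r‖ ^ 2) := by
        rw [mul_comm]
        exact mul_le_mul_of_nonneg_left h4 (norm_nonneg ξ)
      have h7 : κ * (‖adjC‖ * ‖y r‖) ≤ κ * ‖adjC‖ * (1 + ‖y r‖ ^ 2) := by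
        rw [← mul_assoc]
        exact mul_le_mul_of_nonneg_left h5 (by positivity)
      have h8 : κ * ‖adjC (y r)‖ ≤ κ * (‖adjC‖ * ‖y r‖) :=
        mul_le_mul_of_nonneg_left h2 hκ
      linarith
  have hGsub : ∀ (ξ : Θ) (s : ℝ), s ∈ Set.Icc (0:ℝ) T →
      IntervalIntegrable (G ξ) volume 0 s := by
    intro ξ s hs
    apply (hGint ξ).mono_set
    rw [Set.uIcc_of_le hs.1, Set.uIcc_of_le hT.le]
    exact Set.Icc_subset_Icc_right hs.2
  -- representation of the trajectory
  have hrepr : ∀ (ξ : Θ) (ζ : X), ∀ s ∈ Set.Icc (0:ℝ) T, zhat ξ ζ s = z ξ ζ s := by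
    intro ξ ζ s hs
    have hzhat : zhat ξ ζ s = exp (s • Acl) ζ
        + ∫ r in (0:ℝ)..s, exp ((s - r) • Acl) (w ξ r) := rfl
    have hpt : ∀ r : ℝ, exp ((s - r) • Acl) (w ξ r) = exp (s • Acl) (G ξ r) := by
      intro r
      have hcomm : Commute (s • Acl) ((-r) • Acl) :=
        ((Commute.refl Acl).smul_left s).smul_right (-r)
      have hsum : (s - r) • Acl = s • Acl + (-r) • Acl := by
        rw [sub_smul, neg_smul, sub_eq_add_neg]
      rw [hG]
      simp only
      rw [hsum, exp_add_of_commute hcomm, ContinuousLinearMap.mul_apply]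
    have hcong : (∫ r in (0:ℝ)..s, exp ((s - r) • Acl) (w ξ r))
        = ∫ r in (0:ℝ)..s, exp (s • Acl) (G ξ r) :=
      intervalIntegral.integral_congr (fun r _ => hpt r)
    have hcomm2 := (exp (s • Acl)).intervalIntegral_comp_comm (hGsub ξ s hs)
    rw [hzhat, hcong, hcomm2]
    simp only [hz, hW, map_add]
  -- continuity of W and z on [0, T]
  have hWcont : ∀ ξ : Θ, ContinuousOn (W ξ) (Set.Icc 0 T) := by
    intro ξ
    have := intervalIntegral.continuousOn_primitive_interval' (hGint ξ) Set.left_mem_uIcc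
    rwa [Set.uIcc_of_le hT.le] at this
  have hzcont : ∀ (ξ : Θ) (ζ : X), ContinuousOn (z ξ ζ) (Set.Icc 0 T) := by
    intro ξ ζ
    exact ContinuousOn.clm_apply hexpAcl.continuousOn (continuousOn_const.add (hWcont ξ))
  -- measurability and integrability of the output errors
  have he_meas : ∀ (ξ : Θ) (ζ : X),
      AEStronglyMeasurable (e ξ ζ) (volume.restrict (Set.Ioc (0:ℝ) T)) := by
    intro ξ ζ
    apply hy_meas.sub
    have h1 : ContinuousOn (fun s => C (z ξ ζ s)) (Set.Icc 0 T) :=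
      C.continuous.comp_continuousOn (hzcont ξ ζ)
    exact (h1.aestronglyMeasurable measurableSet_Icc).mono_measure
      (Measure.restrict_mono Set.Ioc_subset_Icc_self le_rfl)
  have he_int : ∀ (ξ : Θ) (ζ : X),
      IntervalIntegrable (fun s => ‖e ξ ζ s‖ ^ 2) volume 0 T := by
    intro ξ ζ
    have h1 : ContinuousOn (fun s => C (z ξ ζ s)) (Set.Icc 0 T) :=
      C.continuous.comp_continuousOn (hzcont ξ ζ)
    obtain ⟨K, hK⟩ := (isCompact_Icc (a := (0:ℝ)) (b := T)).exists_bound_of_continuousOn h1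
    have hK0 : (0:ℝ) ≤ K := le_trans (norm_nonneg _) (hK 0 (Set.left_mem_Icc.mpr hT.le))
    have hgdom : IntervalIntegrable (fun s : ℝ => 2 * ‖y s‖ ^ 2 + 2 * K ^ 2) volume 0 T :=
      (hy_L2.const_mul 2).add (intervalIntegrable_const (c := 2 * K ^ 2))
    refine IntervalIntegrable.mono_fun' hgdom ?_ ?_
    · rw [Set.uIoc_of_le hT.le]
      exact (continuous_norm.pow 2).comp_aestronglyMeasurable (he_meas ξ ζ)
    · rw [Set.uIoc_of_le hT.le]
      filter_upwards [ae_restrict_mem measurableSet_Ioc] with s hs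
      have h2 : ‖C (z ξ ζ s)‖ ≤ K := hK s ⟨hs.1.le, hs.2⟩
      have h3 : ‖e ξ ζ s‖ ≤ ‖y s‖ + ‖C (z ξ ζ s)‖ := norm_sub_le _ _
      have h4 : ‖e ξ ζ s‖ ≤ ‖y s‖ + K := by linarith
      have h5 : (0:ℝ) ≤ ‖y s‖ := norm_nonneg _
      rw [Real.norm_eq_abs, abs_of_nonneg (by positivity)]
      nlinarith [norm_nonneg (e ξ ζ s), sq_nonneg (‖y s‖ - K)]
  -- the difference function
  have hd_eq : ∀ s : ℝ, e ξ₁ ζ₁ s - e ξ₂ ζ₂ s = C (z ξ₂ ζ₂ s) - C (z ξ₁ ζ₁ s) := by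
    intro s
    simp only [he]
    abel
  have hd_cont : ContinuousOn (fun s => ‖e ξ₁ ζ₁ s - e ξ₂ ζ₂ s‖ ^ 2) (Set.Icc 0 T) := by
    have : ContinuousOn (fun s => C (z ξ₂ ζ₂ s) - C (z ξ₁ ζ₁ s)) (Set.Icc 0 T) :=
      (C.continuous.comp_continuousOn (hzcont ξ₂ ζ₂)).sub
        (C.continuous.comp_continuousOn (hzcont ξ₁ ζ₁))
    have h2 : ContinuousOn (fun s => ‖C (z ξ₂ ζ₂ s) - C (z ξ₁ ζ₁ s)‖ ^ 2) (Set.Icc 0 T) :=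
      this.norm.pow 2
    apply h2.congr
    intro s _
    show ‖e ξ₁ ζ₁ s - e ξ₂ ζ₂ s‖ ^ 2 = ‖C (z ξ₂ ζ₂ s) - C (z ξ₁ ζ₁ s)‖ ^ 2
    rw [hd_eq s]
  have hd_int : IntervalIntegrable (fun s => ‖e ξ₁ ζ₁ s - e ξ₂ ζ₂ s‖ ^ 2) volume 0 T := by
    apply ContinuousOn.intervalIntegrable
    rwa [Set.uIcc_of_le hT.le]
  -- splitting of the convex combination
  have hwsplit : ∀ r : ℝ, w ξc r = t • w ξ₁ r + (1 - t) • w ξ₂ r := by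
    intro r
    simp only [hw, hξc, map_add, ContinuousLinearMap.map_smul]
    module
  have hGsplit : ∀ r : ℝ, G ξc r = t • G ξ₁ r + (1 - t) • G ξ₂ r := by
    intro r
    simp only [hG, hwsplit r, map_add, ContinuousLinearMap.map_smul]
  have hWsplit : ∀ s ∈ Set.Icc (0:ℝ) T, W ξc s = t • W ξ₁ s + (1 - t) • W ξ₂ s := by
    intro s hs
    simp only [hW]
    rw [show (fun r => G ξc r) = fun r => t • G ξ₁ r + (1 - t) • G ξ₂ r from funext hGsplit]
    have hint1 : IntervalIntegrable (fun r => t • G ξ₁ r) volume 0 s := (hGsub ξ₁ s hs).smul t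
    have hint2 : IntervalIntegrable (fun r => (1 - t) • G ξ₂ r) volume 0 s :=
      (hGsub ξ₂ s hs).smul (1 - t)
    rw [intervalIntegral.integral_add hint1 hint2,
      intervalIntegral.integral_smul, intervalIntegral.integral_smul]
  have hzsplit : ∀ s ∈ Set.Icc (0:ℝ) T, z ξc ζc s = t • z ξ₁ ζ₁ s + (1 - t) • z ξ₂ ζ₂ s := by
    intro s hs
    have h1 : ζc + W ξc s = t • (ζ₁ + W ξ₁ s) + (1 - t) • (ζ₂ + W ξ₂ s) := by
      rw [hWsplit s hs, hζc]
      module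
    simp only [hz]
    rw [h1]
    simp only [map_add, ContinuousLinearMap.map_smul]
  have hesplit : ∀ s ∈ Set.Icc (0:ℝ) T, e ξc ζc s = t • e ξ₁ ζ₁ s + (1 - t) • e ξ₂ ζ₂ s := by
    intro s hs
    simp only [he, hzsplit s hs, map_add, ContinuousLinearMap.map_smul]
    module
  -- J in terms of e
  have hJrepr : ∀ (ξ : Θ) (ζ : X),
      J ξ ζ = ⟪ξ - θ₀, U₀ (ξ - θ₀)⟫ + ∫ s in (0:ℝ)..T, ‖e ξ ζ s‖ ^ 2 := by
    intro ξ ζ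
    have hJdef : J ξ ζ = ⟪ξ - θ₀, U₀ (ξ - θ₀)⟫
        + ∫ s in (0:ℝ)..T, ‖y s - C (zhat ξ ζ s)‖ ^ 2 := rfl
    rw [hJdef]
    congr 1
    apply intervalIntegral.integral_congr
    intro s hs
    rw [Set.uIcc_of_le hT.le] at hs
    simp only [he, hrepr ξ ζ s hs]
  -- splitting the integral term
  have hIsplit : (∫ s in (0:ℝ)..T, ‖e ξc ζc s‖ ^ 2)
      = t * (∫ s in (0:ℝ)..T, ‖e ξ₁ ζ₁ s‖ ^ 2) + (1 - t) * (∫ s in (0:ℝ)..T, ‖e ξ₂ ζ₂ s‖ ^ 2)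
        - t * (1 - t) * (∫ s in (0:ℝ)..T, ‖e ξ₁ ζ₁ s - e ξ₂ ζ₂ s‖ ^ 2) := by
    have hcongr : (∫ s in (0:ℝ)..T, ‖e ξc ζc s‖ ^ 2)
        = ∫ s in (0:ℝ)..T, (t * ‖e ξ₁ ζ₁ s‖ ^ 2 + (1 - t) * ‖e ξ₂ ζ₂ s‖ ^ 2
            - t * (1 - t) * ‖e ξ₁ ζ₁ s - e ξ₂ ζ₂ s‖ ^ 2) := by
      apply intervalIntegral.integral_congr
      intro s hs
      rw [Set.uIcc_of_le hT.le] at hs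
      simp only [hesplit s hs]
      exact norm_sq_combo _ _ t
    rw [hcongr]
    rw [intervalIntegral.integral_sub
      (((he_int ξ₁ ζ₁).const_mul t).add ((he_int ξ₂ ζ₂).const_mul (1 - t)))
      (hd_int.const_mul (t * (1 - t)))]
    rw [intervalIntegral.integral_add ((he_int ξ₁ ζ₁).const_mul t)
      ((he_int ξ₂ ζ₂).const_mul (1 - t))]
    rw [intervalIntegral.integral_const_mul, intervalIntegral.integral_const_mul,
      intervalIntegral.integral_const_mul]
  -- splitting the quadratic term
  have hsym : ∀ a b : Θ, ⟪a, U₀ b⟫ = ⟪b, U₀ a⟫ := by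
    intro a b
    rw [← hU₀sa, ContinuousLinearMap.adjoint_inner_right, hU₀sa, real_inner_comm]
  have hvec : ξc - θ₀ = t • (ξ₁ - θ₀) + (1 - t) • (ξ₂ - θ₀) := by
    rw [hξc]; module
  have hvec2 : (ξ₁ - θ₀) - (ξ₂ - θ₀) = ξ₁ - ξ₂ := by module
  have hQsplit : ⟪ξc - θ₀, U₀ (ξc - θ₀)⟫
      = t * ⟪ξ₁ - θ₀, U₀ (ξ₁ - θ₀)⟫ + (1 - t) * ⟪ξ₂ - θ₀, U₀ (ξ₂ - θ₀)⟫
        - t * (1 - t) * ⟪ξ₁ - ξ₂, U₀ (ξ₁ - ξ₂)⟫ := by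
    rw [hvec, quad_combo U₀ hsym, hvec2]
  -- the positive gap
  set P : ℝ := ⟪ξ₁ - ξ₂, U₀ (ξ₁ - ξ₂)⟫ + ∫ s in (0:ℝ)..T, ‖e ξ₁ ζ₁ s - e ξ₂ ζ₂ s‖ ^ 2 with hP
  have hQnonneg : (0:ℝ) ≤ ⟪ξ₁ - ξ₂, U₀ (ξ₁ - ξ₂)⟫ :=
    le_trans (by positivity) (hU₀ (ξ₁ - ξ₂))
  have hInonneg : (0:ℝ) ≤ ∫ s in (0:ℝ)..T, ‖e ξ₁ ζ₁ s - e ξ₂ ζ₂ s‖ ^ 2 :=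
    intervalIntegral.integral_nonneg hT.le (fun s _ => by positivity)
  have hPpos : 0 < P := by
    by_cases hxi : ξ₁ = ξ₂
    · -- then ζ₁ ≠ ζ₂
      have hzeta : ζ₁ ≠ ζ₂ := by
        intro hcontra
        exact hne (by rw [hxi, hcontra])
      have hdz : ∀ s : ℝ, ‖e ξ₁ ζ₁ s - e ξ₂ ζ₂ s‖ ^ 2
          = ‖C (exp (s • Acl) (ζ₂ - ζ₁))‖ ^ 2 := by
        intro s
        rw [hd_eq s]
        have hzz : C (z ξ₂ ζ₂ s) - C (z ξ₁ ζ₁ s) = C (exp (s • Acl) (ζ₂ - ζ₁)) := by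
          rw [← map_sub]
          congr 1
          simp only [hz, hxi]
          rw [← map_sub]
          congr 1
          abel
        rw [hzz]
      have hIpos : 0 < ∫ s in (0:ℝ)..T, ‖e ξ₁ ζ₁ s - e ξ₂ ζ₂ s‖ ^ 2 := by
        rw [show (fun s => ‖e ξ₁ ζ₁ s - e ξ₂ ζ₂ s‖ ^ 2)
            = fun s => ‖C (exp (s • Acl) (ζ₂ - ζ₁))‖ ^ 2 from funext hdz]
        exact obs_pos A C T κ γ₀ hT hγ₀ hobs Acl rfl (ζ₂ - ζ₁)
          (sub_ne_zero.mpr fun hcontra => hzeta hcontra.symm)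
      rw [hP]
      linarith
    · have hdx : ξ₁ - ξ₂ ≠ 0 := sub_ne_zero.mpr hxi
      have h1 : 0 < δ * ‖ξ₁ - ξ₂‖ ^ 2 := by
        have := norm_pos_iff.mpr hdx
        positivity
      have h2 := hU₀ (ξ₁ - ξ₂)
      rw [hP]
      linarith
  -- conclude
  have hfinal : J ξc ζc = t * J ξ₁ ζ₁ + (1 - t) * J ξ₂ ζ₂ - t * (1 - t) * P := by
    rw [hJrepr ξc ζc, hJrepr ξ₁ ζ₁, hJrepr ξ₂ ζ₂, hQsplit, hIsplit, hP]
    ring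
  rw [hfinal]
  have := mul_pos (mul_pos ht1 ht2) hPpos
  linarith
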